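/- Under the assumptions and iteration of the fast gradient method in model generality (Lemma 3 per-step estimate with errors δ₁^k(·,·), δ₂^k, A_0 = 0, u_0 = x_0), after N steps: f(x_N) − f(x_*) ≤ R²/(2A_N) + (1/A_N) Σ_{k=0}^{N−1} A_k δ₁^k(x_k, y_{k+1}) + (1/A_N) Σ_{k=0}^{N−1} α_{k+1} δ₁^k(x_*, y_{k+1}) + (1/A_N) Σ_{k=0}^{N−1} A_{k+1} δ₂^k, where R = ‖x_* − x_0‖. -/

import Mathlib

theorem fgm_telescoped (n : ℕ) (f : EuclideanSpace ℝ (Fin n) → ℝ)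
    (δ₁ : ℕ → EuclideanSpace ℝ (Fin n) → EuclideanSpace ℝ (Fin n) → ℝ) (δ₂ : ℕ → ℝ)
    (μ : ℝ) (hμ : 0 ≤ μ)
    (α A : ℕ → ℝ) (hA0 : A 0 = 0)
    (hArec : ∀ k, A (k + 1) = A k + α (k + 1))
    (x u y : ℕ → EuclideanSpace ℝ (Fin n)) (hu0 : u 0 = x 0)
    (xstar : EuclideanSpace ℝ (Fin n))
    (N : ℕ) (hANpos : 0 < A N)
    (hstep : ∀ k < N,
      A (k + 1) * f (x (k + 1)) - A k * f (x k)
          + ((1 + A (k + 1) * μ) / 2) * ‖xstar - u (k + 1)‖ ^ 2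
          - ((1 + A k * μ) / 2) * ‖xstar - u k‖ ^ 2 ≤
        α (k + 1) * f xstar + A k * δ₁ k (x k) (y (k + 1))
          + α (k + 1) * δ₁ k xstar (y (k + 1)) + A (k + 1) * δ₂ k) :
    f (x N) - f xstar ≤
      ‖xstar - x 0‖ ^ 2 / (2 * A N)
        + (1 / A N) * ∑ k ∈ Finset.range N, A k * δ₁ k (x k) (y (k + 1))
        + (1 / A N) * ∑ k ∈ Finset.range N, α (k + 1) * δ₁ k xstar (y (k + 1))
        + (1 / A N) * ∑ k ∈ Finset.range N, A (k + 1) * δ₂ k := by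
  set g : ℕ → ℝ := fun k =>
    A k * f (x k) + ((1 + A k * μ) / 2) * ‖xstar - u k‖ ^ 2 with hg
  clear_value g
  have htel : ∑ k ∈ Finset.range N, (g (k + 1) - g k) = g N - g 0 :=
    Finset.sum_range_sub g N
  have hAtel : ∑ k ∈ Finset.range N, α (k + 1) = A N := by
    have : ∑ k ∈ Finset.range N, (A (k + 1) - A k) = A N - A 0 :=
      Finset.sum_range_sub A N
    calc ∑ k ∈ Finset.range N, α (k + 1)
        = ∑ k ∈ Finset.range N, (A (k + 1) - A k) := by
          apply Finset.sum_congr rfl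
          intro k _
          rw [hArec k]; ring
      _ = A N - A 0 := this
      _ = A N := by rw [hA0]; ring
  have hsum : g N - g 0 ≤ A N * f xstar
      + ∑ k ∈ Finset.range N, A k * δ₁ k (x k) (y (k + 1))
      + ∑ k ∈ Finset.range N, α (k + 1) * δ₁ k xstar (y (k + 1))
      + ∑ k ∈ Finset.range N, A (k + 1) * δ₂ k := by
    rw [← htel]
    calc ∑ k ∈ Finset.range N, (g (k + 1) - g k)
        ≤ ∑ k ∈ Finset.range N,
            (α (k + 1) * f xstar + A k * δ₁ k (x k) (y (k + 1))
              + α (k + 1) * δ₁ k xstar (y (k + 1)) + A (k + 1) * δ₂ k) := by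
          apply Finset.sum_le_sum
          intro k hk
          have := hstep k (Finset.mem_range.mp hk)
          rw [hg]
          dsimp only
          linarith
      _ = _ := by
          simp only [Finset.sum_add_distrib, ← Finset.sum_mul]
          rw [hAtel]
  have hg0 : g 0 = (1 / 2) * ‖xstar - x 0‖ ^ 2 := by
    simp [hg, hA0, hu0]
  have hgN : A N * f (x N) ≤ g N := by
    have h1 : 0 ≤ (1 + A N * μ) / 2 := by positivity
    have h2 : 0 ≤ ((1 + A N * μ) / 2) * ‖xstar - u N‖ ^ 2 := by positivity
    simp only [hg]
    linarith
  have key : A N * (f (x N) - f xstar)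
      ≤ ‖xstar - x 0‖ ^ 2 / 2
        + ∑ k ∈ Finset.range N, A k * δ₁ k (x k) (y (k + 1))
        + ∑ k ∈ Finset.range N, α (k + 1) * δ₁ k xstar (y (k + 1))
        + ∑ k ∈ Finset.range N, A (k + 1) * δ₂ k := by
    have := hsum
    rw [hg0] at this
    rw [mul_sub]
    linarith [hgN]
  have hrewrite :
      ‖xstar - x 0‖ ^ 2 / (2 * A N)
        + (1 / A N) * ∑ k ∈ Finset.range N, A k * δ₁ k (x k) (y (k + 1))
        + (1 / A N) * ∑ k ∈ Finset.range N, α (k + 1) * δ₁ k xstar (y (k + 1))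
        + (1 / A N) * ∑ k ∈ Finset.range N, A (k + 1) * δ₂ k
      = (‖xstar - x 0‖ ^ 2 / 2
        + ∑ k ∈ Finset.range N, A k * δ₁ k (x k) (y (k + 1))
        + ∑ k ∈ Finset.range N, α (k + 1) * δ₁ k xstar (y (k + 1))
        + ∑ k ∈ Finset.range N, A (k + 1) * δ₂ k) / A N := by
    field_simp
  rw [hrewrite, le_div_iff₀ hANpos, mul_comm]
  exact key
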